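/- The number of edges of the edge polytope of the complete bipartite graph K_{m,n} (with m,n ≥ 1 and m+n ≥ 3) equals mn(m+n-2)/2. -/

import Mathlib

open Finset SimpleGraph

/-- A 4-cycle exists within the vertex set `s` of the graph `G`. -/
def fourCycleOn {V : Type*} (G : SimpleGraph V) (s : Set V) : Prop :=
  ∃ a b c d, a ∈ s ∧ b ∈ s ∧ c ∈ s ∧ d ∈ s ∧
    a ≠ b ∧ a ≠ c ∧ a ≠ d ∧ b ≠ c ∧ b ≠ d ∧ c ≠ d ∧
    G.Adj a b ∧ G.Adj b c ∧ G.Adj c d ∧ G.Adj d a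

/-- The pair of edges `{e,f}` spans an edge of the edge polytope: they share a
vertex, or they are disjoint and the induced subgraph on their endpoints has no 4-cycle. -/
def epPair {V : Type*} (G : SimpleGraph V) (e f : Sym2 V) : Prop :=
  (∃ v, v ∈ e ∧ v ∈ f) ∨
  ((¬ ∃ v, v ∈ e ∧ v ∈ f) ∧ ¬ fourCycleOn G {v | v ∈ e ∨ v ∈ f})

open scoped Classical in
/-- The number of edges (1-dimensional faces) of the edge polytope of `G`:
the number of unordered pairs of distinct edges satisfying `epPair`. -/
noncomputable def epsilon {V : Type*} [Fintype V] (G : SimpleGraph V) : ℕ :=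
  ((G.edgeFinset.powersetCard 2).filter
    (fun s => ∀ e ∈ s, ∀ f ∈ s, e ≠ f → epPair G e f)).card

open scoped Classical in
/-- number of 4-subsets inducing a path of length 3. -/
noncomputable def aCount {V : Type*} [Fintype V] (H : SimpleGraph V) : ℕ :=
  ((univ.powersetCard 4).filter (fun s => ∃ a b c d : V,
    s = {a, b, c, d} ∧ a ≠ b ∧ a ≠ c ∧ a ≠ d ∧ b ≠ c ∧ b ≠ d ∧ c ≠ d ∧
    H.Adj a b ∧ H.Adj b c ∧ H.Adj c d ∧ ¬H.Adj a c ∧ ¬H.Adj a d ∧ ¬H.Adj b d)).card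

open scoped Classical in
/-- number of 4-subsets inducing a cycle of length 4. -/
noncomputable def bCount {V : Type*} [Fintype V] (H : SimpleGraph V) : ℕ :=
  ((univ.powersetCard 4).filter (fun s => ∃ a b c d : V,
    s = {a, b, c, d} ∧ a ≠ b ∧ a ≠ c ∧ a ≠ d ∧ b ≠ c ∧ b ≠ d ∧ c ≠ d ∧
    H.Adj a b ∧ H.Adj b c ∧ H.Adj c d ∧ H.Adj d a ∧ ¬H.Adj a c ∧ ¬H.Adj b d)).card

open scoped Classical in
/-- number of 4-subsets inducing a path of length 2 plus an isolated vertex. -/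
noncomputable def cCount {V : Type*} [Fintype V] (H : SimpleGraph V) : ℕ :=
  ((univ.powersetCard 4).filter (fun s => ∃ a b c d : V,
    s = {a, b, c, d} ∧ a ≠ b ∧ a ≠ c ∧ a ≠ d ∧ b ≠ c ∧ b ≠ d ∧ c ≠ d ∧
    H.Adj a b ∧ H.Adj b c ∧ ¬H.Adj a c ∧ ¬H.Adj a d ∧ ¬H.Adj b d ∧ ¬H.Adj c d)).card

open scoped Classical in
/-- the number of triangles of `H`. -/
noncomputable def k3 {V : Type*} [Fintype V] (H : SimpleGraph V) : ℕ :=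
  ((univ.powersetCard 3).filter (fun s => ∀ i ∈ s, ∀ j ∈ s, i ≠ j → H.Adj i j)).card

open scoped Classical in
/-- the number of 3-subsets inducing a path with exactly two edges. -/
noncomputable def psi {V : Type*} [Fintype V] (H : SimpleGraph V) : ℕ :=
  ((univ.powersetCard 3).filter (fun s => ∃ a b c : V,
    s = {a, b, c} ∧ a ≠ b ∧ a ≠ c ∧ b ≠ c ∧ H.Adj a b ∧ H.Adj b c ∧ ¬H.Adj a c)).card

/-- the complete bipartite graph `K_{m,n}` on the vertex set `[d]`, with parts
`{0,…,m-1}` and `{m,…,m+n-1}`. -/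
def bip (d m n : ℕ) : SimpleGraph (Fin d) where
  Adj i j := ((i : ℕ) < m ∧ m ≤ (j : ℕ) ∧ (j : ℕ) < m + n) ∨
    ((j : ℕ) < m ∧ m ≤ (i : ℕ) ∧ (i : ℕ) < m + n)
  symm := ⟨by intro i j h; tauto⟩
  loopless := ⟨by intro i h; omega⟩

/-- the copy of `H` on the first `r` vertices of `[d]`. -/
def embedGraph {r : ℕ} (H : SimpleGraph (Fin r)) (d : ℕ) : SimpleGraph (Fin d) where
  Adj i j := ∃ (hi : (i : ℕ) < r) (hj : (j : ℕ) < r), H.Adj ⟨i, hi⟩ ⟨j, hj⟩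
  symm := ⟨by rintro i j ⟨hi, hj, h⟩; exact ⟨hj, hi, h.symm⟩⟩
  loopless := ⟨by rintro i ⟨hi, hj, h⟩; exact H.ne_of_adj h rfl⟩

/-- the subgraph of `H` consisting of the edges in the connected component `c`. -/
def compGraph {V : Type*} (H : SimpleGraph V) (c : H.ConnectedComponent) :
    SimpleGraph V where
  Adj i j := H.Adj i j ∧ H.connectedComponentMk i = c
  symm := ⟨by
    rintro i j ⟨h, hc⟩
    exact ⟨h.symm, (SimpleGraph.ConnectedComponent.sound h.symm.reachable).trans hc⟩⟩
  loopless := ⟨by rintro i ⟨h, _⟩; exact H.ne_of_adj h rfl⟩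

open scoped Classical in
/-- `|X_{i,j}|`: the number of vertices (other than `i, j`) adjacent to `i` but not `j`. -/
noncomputable def cardX {V : Type*} [Fintype V] (H : SimpleGraph V) (i j : V) : ℕ :=
  (univ.filter (fun ℓ => ℓ ≠ i ∧ ℓ ≠ j ∧ H.Adj i ℓ ∧ ¬ H.Adj j ℓ)).card



section EdgeCountAux

open scoped Classical

variable {m n : ℕ}

private lemma kb_fourCycle {a c : Fin m} {b d : Fin n}
    (hac : a ≠ c) (hbd : b ≠ d) {s : Set (Fin m ⊕ Fin n)}
    (ha : Sum.inl a ∈ s) (hb : Sum.inr b ∈ s) (hc : Sum.inl c ∈ s) (hd : Sum.inr d ∈ s) :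
    fourCycleOn (completeBipartiteGraph (Fin m) (Fin n)) s := by
  refine ⟨Sum.inl a, Sum.inr b, Sum.inl c, Sum.inr d, ha, hb, hc, hd, ?_, ?_, ?_, ?_, ?_, ?_,
    ?_, ?_, ?_, ?_⟩ <;> simp [hac, hbd]

private lemma kb_edge_form {e : Sym2 (Fin m ⊕ Fin n)}
    (he : e ∈ (completeBipartiteGraph (Fin m) (Fin n)).edgeSet) :
    ∃ (a : Fin m) (b : Fin n), e = s(Sum.inl a, Sum.inr b) := by
  induction e using Sym2.ind with
  | _ x y =>
    rw [SimpleGraph.mem_edgeSet] at he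
    rcases x with a | b <;> rcases y with a' | b' <;> simp at he
    · exact ⟨a, b', rfl⟩
    · exact ⟨a', b, Sym2.eq_swap⟩

private lemma kb_disjoint_fourCycle {e f : Sym2 (Fin m ⊕ Fin n)}
    (he : e ∈ (completeBipartiteGraph (Fin m) (Fin n)).edgeSet)
    (hf : f ∈ (completeBipartiteGraph (Fin m) (Fin n)).edgeSet)
    (hd : ¬ ∃ v, v ∈ e ∧ v ∈ f) :
    fourCycleOn (completeBipartiteGraph (Fin m) (Fin n)) {v | v ∈ e ∨ v ∈ f} := by
  push_neg at hd
  obtain ⟨a1, b1, rfl⟩ := kb_edge_form he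
  obtain ⟨a2, b2, rfl⟩ := kb_edge_form hf
  have hac : a1 ≠ a2 := by
    intro h
    exact hd (Sum.inl a1) (by simp) (by simp [h])
  have hbd : b1 ≠ b2 := by
    intro h
    exact hd (Sum.inr b1) (by simp) (by simp [h])
  exact kb_fourCycle hac hbd (Or.inl (by simp)) (Or.inl (by simp))
    (Or.inr (by simp)) (Or.inr (by simp))

private lemma kb_epPair_iff {e f : Sym2 (Fin m ⊕ Fin n)}
    (he : e ∈ (completeBipartiteGraph (Fin m) (Fin n)).edgeSet)
    (hf : f ∈ (completeBipartiteGraph (Fin m) (Fin n)).edgeSet) :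
    epPair (completeBipartiteGraph (Fin m) (Fin n)) e f ↔ ∃ v, v ∈ e ∧ v ∈ f := by
  constructor
  · rintro (h | ⟨hd, hcyc⟩)
    · exact h
    · exact absurd (kb_disjoint_fourCycle he hf hd) hcyc
  · exact Or.inl

set_option maxHeartbeats 1000000 in
private lemma kb_epsilon_eq (m n : ℕ) :
    epsilon (completeBipartiteGraph (Fin m) (Fin n)) =
      ∑ v : Fin m ⊕ Fin n, ((completeBipartiteGraph (Fin m) (Fin n)).degree v).choose 2 := by
  set G := completeBipartiteGraph (Fin m) (Fin n) with hG
  have h1 : ∑ v : Fin m ⊕ Fin n, (G.degree v).choose 2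
      = (Finset.univ.sigma (fun v => (G.neighborFinset v).powersetCard 2)).card := by
    rw [Finset.card_sigma]
    refine Finset.sum_congr rfl (fun v _ => ?_)
    rw [Finset.card_powersetCard, SimpleGraph.card_neighborFinset_eq_degree]
  rw [h1, epsilon]
  refine (Finset.card_bij (fun p _ => p.2.image (fun a => s(p.1, a))) ?_ ?_ ?_).symm
  · rintro ⟨v, t⟩ hp
    simp only [Finset.mem_sigma, Finset.mem_powersetCard] at hp
    obtain ⟨-, hsub, hcard⟩ := hp
    obtain ⟨a, b, hab, rfl⟩ := Finset.card_eq_two.mp hcard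
    have hva : G.Adj v a := by
      have := hsub (Finset.mem_insert_self a {b}); rwa [SimpleGraph.mem_neighborFinset] at this
    have hvb : G.Adj v b := by
      have := hsub (Finset.mem_insert_of_mem (Finset.mem_singleton_self b))
      rwa [SimpleGraph.mem_neighborFinset] at this
    have hne : s(v, a) ≠ s(v, b) := by
      intro h
      rcases Sym2.eq_iff.mp h with ⟨-, rfl⟩ | ⟨rfl, rfl⟩
      · exact hab rfl
      · exact G.irrefl hva
    simp only [Finset.mem_filter, Finset.mem_powersetCard]
    refine ⟨⟨?_, ?_⟩, ?_⟩
    · intro x hx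
      simp only [Finset.image_insert, Finset.image_singleton, Finset.mem_insert,
        Finset.mem_singleton] at hx
      rcases hx with rfl | rfl
      · exact SimpleGraph.mem_edgeFinset.mpr hva
      · exact SimpleGraph.mem_edgeFinset.mpr hvb
    · rw [Finset.image_insert, Finset.image_singleton]
      exact Finset.card_pair hne
    · intro e hee f hff _
      simp only [Finset.image_insert, Finset.image_singleton, Finset.mem_insert,
        Finset.mem_singleton] at hee hff
      refine Or.inl ⟨v, ?_, ?_⟩
      · rcases hee with rfl | rfl <;> simp
      · rcases hff with rfl | rfl <;> simp
  · rintro ⟨v, t⟩ hp ⟨w, u⟩ hq himg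
    simp only [Finset.mem_sigma, Finset.mem_powersetCard] at hp hq
    obtain ⟨-, hsubt, hcardt⟩ := hp
    obtain ⟨-, hsubu, hcardu⟩ := hq
    have hadjt : ∀ x ∈ t, G.Adj v x := fun x hx => by
      have := hsubt hx; rwa [SimpleGraph.mem_neighborFinset] at this
    have hadju : ∀ x ∈ u, G.Adj w x := fun x hx => by
      have := hsubu hx; rwa [SimpleGraph.mem_neighborFinset] at this
    obtain ⟨a, b, hab, rfl⟩ := Finset.card_eq_two.mp hcardt
    obtain ⟨c, d, hcd, rfl⟩ := Finset.card_eq_two.mp hcardu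
    simp only [Finset.image_insert, Finset.image_singleton] at himg
    have hvw : v = w := by
      by_contra hvw
      have hne : s(v, a) ≠ s(v, b) := by
        intro h
        rcases Sym2.eq_iff.mp h with ⟨-, rfl⟩ | ⟨rfl, rfl⟩
        · exact hab rfl
        · exact G.irrefl (hadjt _ (Finset.mem_insert_self _ _))
      have h1 : s(v, a) ∈ ({s(w, c), s(w, d)} : Finset (Sym2 (Fin m ⊕ Fin n))) := by
        rw [← himg]; simp
      have h2 : s(v, b) ∈ ({s(w, c), s(w, d)} : Finset (Sym2 (Fin m ⊕ Fin n))) := by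
        rw [← himg]; simp
      have hw1 : w ∈ s(v, a) := by
        rcases Finset.mem_insert.mp h1 with h | h
        · rw [h]; simp
        · rw [Finset.mem_singleton.mp h]; simp
      have hw2 : w ∈ s(v, b) := by
        rcases Finset.mem_insert.mp h2 with h | h
        · rw [h]; simp
        · rw [Finset.mem_singleton.mp h]; simp
      exact hne (Sym2.eq_of_ne_mem hvw (by simp) hw1 (by simp) hw2)
    subst hvw
    have key : ∀ x y : Fin m ⊕ Fin n, G.Adj v x → G.Adj v y → s(v, x) = s(v, y) → x = y := by
      intro x y hx hy h
      rcases Sym2.eq_iff.mp h with ⟨-, h⟩ | ⟨rfl, rfl⟩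
      · exact h
      · exact absurd hx (G.irrefl)
    have htu : ({a, b} : Finset (Fin m ⊕ Fin n)) = {c, d} := by
      ext x
      constructor
      · intro hx
        have : s(v, x) ∈ ({s(v, c), s(v, d)} : Finset (Sym2 (Fin m ⊕ Fin n))) := by
          rw [← himg]
          rcases Finset.mem_insert.mp hx with rfl | hx
          · simp
          · rw [Finset.mem_singleton.mp hx]; simp
        rcases Finset.mem_insert.mp this with h | h
        · rw [key x c (hadjt x hx) (hadju c (by simp)) h]; simp
        · rw [key x d (hadjt x hx) (hadju d (by simp)) (Finset.mem_singleton.mp h)]; simp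
      · intro hx
        have : s(v, x) ∈ ({s(v, a), s(v, b)} : Finset (Sym2 (Fin m ⊕ Fin n))) := by
          rw [himg]
          rcases Finset.mem_insert.mp hx with rfl | hx
          · simp
          · rw [Finset.mem_singleton.mp hx]; simp
        rcases Finset.mem_insert.mp this with h | h
        · rw [key x a (hadju x hx) (hadjt a (by simp)) h]; simp
        · rw [key x b (hadju x hx) (hadjt b (by simp)) (Finset.mem_singleton.mp h)]; simp
    rw [htu]
  · intro p hp
    simp only [Finset.mem_filter, Finset.mem_powersetCard] at hp
    obtain ⟨⟨hsub, hcard⟩, hpred⟩ := hp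
    obtain ⟨e, f, hef, rfl⟩ := Finset.card_eq_two.mp hcard
    have he : e ∈ G.edgeSet := SimpleGraph.mem_edgeFinset.mp (hsub (by simp))
    have hf : f ∈ G.edgeSet := SimpleGraph.mem_edgeFinset.mp (hsub (by simp))
    have hpair : epPair G e f := hpred e (by simp) f (by simp) hef
    obtain ⟨v, hve, hvf⟩ := (kb_epPair_iff he hf).mp hpair
    obtain ⟨a, hea⟩ : ∃ a, s(v, a) = e := ⟨_, Sym2.other_spec hve⟩
    obtain ⟨b, hfb⟩ : ∃ b, s(v, b) = f := ⟨_, Sym2.other_spec hvf⟩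
    have hva : G.Adj v a := by rw [← SimpleGraph.mem_edgeSet, hea]; exact he
    have hvb : G.Adj v b := by rw [← SimpleGraph.mem_edgeSet, hfb]; exact hf
    have hab : a ≠ b := by
      rintro rfl
      exact hef (hea.symm.trans hfb)
    refine ⟨⟨v, {a, b}⟩, ?_, ?_⟩
    · simp only [Finset.mem_sigma, Finset.mem_powersetCard]
      refine ⟨Finset.mem_univ _, ?_, ?_⟩
      · intro x hx
        rcases Finset.mem_insert.mp hx with rfl | hx
        · exact (SimpleGraph.mem_neighborFinset _ _ _).mpr hva
        · rw [Finset.mem_singleton.mp hx]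
          exact (SimpleGraph.mem_neighborFinset _ _ _).mpr hvb
      · exact Finset.card_pair hab
    · simp only [Finset.image_insert, Finset.image_singleton]
      rw [hea, hfb]



private lemma kb_degree_inl (m n : ℕ) (i : Fin m) :
    (completeBipartiteGraph (Fin m) (Fin n)).degree (Sum.inl i) = n := by
  have h : (completeBipartiteGraph (Fin m) (Fin n)).neighborFinset (Sum.inl i)
      = Finset.univ.map ⟨Sum.inr, Sum.inr_injective⟩ := by
    ext w
    cases w <;> simp [SimpleGraph.mem_neighborFinset]
  rw [SimpleGraph.degree, h, Finset.card_map, Finset.card_univ, Fintype.card_fin]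

private lemma kb_degree_inr (m n : ℕ) (j : Fin n) :
    (completeBipartiteGraph (Fin m) (Fin n)).degree (Sum.inr j) = m := by
  have h : (completeBipartiteGraph (Fin m) (Fin n)).neighborFinset (Sum.inr j)
      = Finset.univ.map ⟨Sum.inl, Sum.inl_injective⟩ := by
    ext w
    cases w <;> simp [SimpleGraph.mem_neighborFinset]
  rw [SimpleGraph.degree, h, Finset.card_map, Finset.card_univ, Fintype.card_fin]

private lemma two_mul_choose_two (k : ℕ) : 2 * (k + 1).choose 2 = (k + 1) * k := by
  have hdvd : 2 ∣ (k + 1) * k := by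
    rw [mul_comm]
    exact (Nat.even_mul_succ_self k).two_dvd
  rw [Nat.choose_two_right, Nat.succ_sub_one, Nat.mul_div_cancel' hdvd]

end EdgeCountAux

open scoped Classical in
theorem edge_count_complete_bipartite (m n : ℕ) (hm : 1 ≤ m) (hn : 1 ≤ n)
    (hmn : 3 ≤ m + n) :
    epsilon (completeBipartiteGraph (Fin m) (Fin n)) = m * n * (m + n - 2) / 2 :=  by
  obtain ⟨a, rfl⟩ : ∃ a, m = a + 1 := ⟨m - 1, by omega⟩
  obtain ⟨b, rfl⟩ : ∃ b, n = b + 1 := ⟨n - 1, by omega⟩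
  rw [kb_epsilon_eq, Fintype.sum_sum_type]
  simp only [kb_degree_inl, kb_degree_inr, Finset.sum_const, Finset.card_univ,
    Fintype.card_fin, smul_eq_mul]
  have hsub : a + 1 + (b + 1) - 2 = a + b := by omega
  symm
  apply Nat.div_eq_of_eq_mul_left (by norm_num)
  rw [hsub]
  have e1 := two_mul_choose_two b
  have e2 := two_mul_choose_two a
  have h : ((a + 1) * ((b + 1).choose 2) + (b + 1) * ((a + 1).choose 2)) * 2
      = (a + 1) * (2 * (b + 1).choose 2) + (b + 1) * (2 * (a + 1).choose 2) := by ring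
  rw [h, e1, e2]
  ring
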